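/- Let A = (a_{ij}) be a symmetrizable generalized Cartan matrix indexed by a finite set I such that every 2×2 principal submatrix A|_{i,j} (i≠j) is one of A₁⊕A₁ = [[2,0],[0,2]], A₂ = [[2,−1],[−1,2]], B₂ = [[2,−2],[−1,2]] or its transpose. Let X be an A-regular graph with a maximum element that satisfies (S6),(S7),(S8),(S9) for every ordered pair (i,j) with A|_{i,j}=B₂. Then X has the homogeneous local confluence property. -/

import Mathlib

def iterOpt {X : Type*} (g : X → Option X) : ℕ → X → Option X
  | 0, x => some x
  | n+1, x => (g x).bind (iterOpt g n)

def chainOpt {X I : Type*} (g : I → X → Option X) (w : List I) (x : X) : Option X :=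
  w.foldr (fun i o => o.bind (g i)) (some x)

/-- A good I-colored directed graph: partial operators `e i`, `f i` that are mutually
inverse partial bijections, together with the (finite) string lengths `eps`, `phi`. -/
structure GoodGraph (I : Type*) (X : Type*) where
  e : I → X → Option X
  f : I → X → Option X
  eps : I → X → ℕ
  phi : I → X → ℕ
  ef : ∀ i x y, e i y = some x ↔ f i x = some y
  eps_ne : ∀ i x, iterOpt (e i) (eps i x) x ≠ none
  eps_top : ∀ i x, iterOpt (e i) (eps i x + 1) x = none
  phi_ne : ∀ i x, iterOpt (f i) (phi i x) x ≠ none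
  phi_top : ∀ i x, iterOpt (f i) (phi i x + 1) x = none

/-- Maximum element: no incoming arrows, and every element reachable from it. -/
def IsMaxElem {I X : Type*} (G : GoodGraph I X) (x0 : X) : Prop :=
  (∀ i, G.e i x0 = none) ∧ ∀ x, ∃ w : List I, chainOpt G.f w x0 = some x

/-- Homogeneous local confluence property. -/
def HLC {I X : Type*} (G : GoodGraph I X) : Prop :=
  ∀ (x : X) (i j : I), i ≠ j → G.e i x ≠ none → G.e j x ≠ none →
    ∃ (w w' : List I) (z : X), 2 ≤ w.length ∧
      (w : Multiset I) = (w' : Multiset I) ∧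
      w.getLast? = some i ∧ w'.getLast? = some j ∧
      chainOpt G.e w x = some z ∧ chainOpt G.e w' x = some z

def axS2 {I X : Type*} (A : I → I → ℤ) (G : GoodGraph I X) : Prop :=
  ∀ i j : I, i ≠ j → ∀ x y : X, G.e i x = some y →
    ((G.phi j y : ℤ) - G.phi j x) - ((G.eps j y : ℤ) - G.eps j x) = A j i

def axS3 {I X : Type*} (G : GoodGraph I X) : Prop :=
  ∀ i j : I, i ≠ j → ∀ x y : X, G.e i x = some y →
    G.phi j y ≤ G.phi j x ∧ G.eps j x ≤ G.eps j y

def axS4 {I X : Type*} (G : GoodGraph I X) : Prop :=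
  ∀ i j : I, i ≠ j → ∀ x xi xj : X, G.e i x = some xi → G.e j x = some xj →
    ((G.eps j xi = G.eps j x →
        ∃ z, G.e j xi = some z ∧ G.e i xj = some z ∧ G.phi i xi = G.phi i z) ∧
     (G.eps j xi = G.eps j x + 1 → G.eps i xj = G.eps i x + 1 →
        ∃ z zi zj, chainOpt G.e [i, j, j, i] x = some z ∧
          chainOpt G.e [j, i, i, j] x = some z ∧
          G.f i z = some zi ∧ G.f j z = some zj ∧
          G.phi j zi = G.phi j z + 1 ∧ G.phi i zj = G.phi i z + 1))

def axS5 {I X : Type*} (G : GoodGraph I X) : Prop :=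
  ∀ i j : I, i ≠ j → ∀ x xi xj : X, G.f i x = some xi → G.f j x = some xj →
    ((G.phi j xi = G.phi j x →
        ∃ z, G.f j xi = some z ∧ G.f i xj = some z ∧ G.eps i xi = G.eps i z) ∧
     (G.phi j xi = G.phi j x + 1 → G.phi i xj = G.phi i x + 1 →
        ∃ z zi zj, chainOpt G.f [i, j, j, i] x = some z ∧
          chainOpt G.f [j, i, i, j] x = some z ∧
          G.e i z = some zi ∧ G.e j z = some zj ∧
          G.eps j zi = G.eps j z + 1 ∧ G.eps i zj = G.eps i z + 1))

/-- `X` is `A`-regular. -/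
def ARegular {I X : Type*} (A : I → I → ℤ) (G : GoodGraph I X) : Prop :=
  axS2 A G ∧ axS3 G ∧ axS4 G ∧ axS5 G

/-- (S6), for the ordered pair (i,j) with a_{ij} = -2, a_{ji} = -1. -/
def axS6 {I X : Type*} (G : GoodGraph I X) (i j : I) : Prop :=
  ∀ x xi xj : X, G.e i x = some xi → G.e j x = some xj →
    G.eps j xi = G.eps j x + 1 → G.eps i xj = G.eps i x + 2 →
    ∃ y y', chainOpt G.e [i, i, j] x = some y ∧
      chainOpt G.e [i, i, j, j, i] x = some y' ∧
      ∀ fy fy', G.f i y = some fy → G.f i y' = some fy' →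
        (¬ (G.phi j fy = G.phi j y + 1 ∧ G.phi j fy' = G.phi j y')) ∧
        (G.phi j fy = G.phi j y + 1 → G.phi j fy' = G.phi j y' + 1 →
          ∃ t, G.e i y = some t ∧ G.f j y' = some t ∧ G.phi i t = G.phi i y' + 1) ∧
        (G.phi j fy = G.phi j y → G.phi j fy' = G.phi j y' + 1 →
          ∃ z zi zj, chainOpt G.e [j, i, i, i, j, j, i] x = some z ∧
            chainOpt G.e [i, j, j, i, i, i, j] x = some z ∧
            G.f i z = some zi ∧ G.f j z = some zj ∧
            G.phi j zi = G.phi j z + 1 ∧ G.phi i zj = G.phi i z + 2) ∧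
        (G.phi j fy = G.phi j y → G.phi j fy' = G.phi j y' →
          ∃ t, G.e i y = some t ∧ G.f j y' = some t ∧ G.phi i t = G.phi i y' + 2 ∧
            ∃ u v, chainOpt G.f [i, i] y' = some u ∧ G.f j u = some v ∧
              G.phi i v = G.phi i u)

/-- (S7). -/
def axS7 {I X : Type*} (G : GoodGraph I X) (i j : I) : Prop :=
  ∀ x xi xj : X, G.f i x = some xi → G.f j x = some xj →
    G.phi j xi = G.phi j x + 1 → G.phi i xj = G.phi i x + 2 →
    ∃ y y', chainOpt G.f [i, i, j] x = some y ∧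
      chainOpt G.f [i, i, j, j, i] x = some y' ∧
      ∀ ey ey', G.e i y = some ey → G.e i y' = some ey' →
        G.eps j ey = G.eps j y → G.eps j ey' = G.eps j y' + 1 →
        ∃ z, chainOpt G.f [j, i, i, i, j, j, i] x = some z ∧
          chainOpt G.f [i, j, j, i, i, i, j] x = some z

/-- (S8). -/
def axS8 {I X : Type*} (G : GoodGraph I X) (i j : I) : Prop :=
  ∀ x xi xj : X, G.f i x = some xi → G.f j x = some xj →
    G.phi j xi = G.phi j x + 1 → G.phi i xj = G.phi i x + 1 → 2 ≤ G.phi i x →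
    ∃ z, chainOpt G.f [i, j, j, i, i] x = some z ∧
      chainOpt G.f [j, i, i, i, j] x = some z

/-- (S9). -/
def axS9 {I X : Type*} (G : GoodGraph I X) (i j : I) : Prop :=
  ∀ x xi xj : X, G.f i x = some xi → G.f j x = some xj →
    G.phi j xi = G.phi j x → G.phi i xj = G.phi i x + 2 →
    ∀ v u, chainOpt G.f [i, i] x = some v → G.f j v = some u → G.phi i u = G.phi i v →
    ∃ z, chainOpt G.f [i, j, j, i, i] x = some z ∧
      chainOpt G.f [j, i, i, i, j] x = some z

def IsGCM {I : Type*} (A : I → I → ℤ) : Prop :=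
  (∀ i, A i i = 2) ∧ (∀ i j, i ≠ j → A i j ≤ 0) ∧ (∀ i j, A i j = 0 ↔ A j i = 0)

def IsSymmetrizable {I : Type*} (A : I → I → ℤ) : Prop :=
  ∃ d : I → ℤ, (∀ i, 0 < d i) ∧ ∀ i j, d i * A i j = d j * A j i

/-- Every 2×2 principal submatrix of `A` is `A₁⊕A₁`, `A₂`, `B₂` or `ᵗB₂`. -/
def Rank2OK {I : Type*} (A : I → I → ℤ) : Prop :=
  ∀ i j, i ≠ j →
    (A i j = 0 ∧ A j i = 0) ∨ (A i j = -1 ∧ A j i = -1) ∨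
    (A i j = -2 ∧ A j i = -1) ∨ (A i j = -1 ∧ A j i = -2)

/-- (S6)--(S9) hold for every ordered pair with `A|_{i,j} = B₂`. -/
def ExtraB2 {I X : Type*} (A : I → I → ℤ) (G : GoodGraph I X) : Prop :=
  ∀ i j, A i j = -2 → A j i = -1 →
    axS6 G i j ∧ axS7 G i j ∧ axS8 G i j ∧ axS9 G i j


private lemma chain_cons' {X I : Type*} (g : I → X → Option X) (a : I) (w : List I) (x : X) :
    chainOpt g (a :: w) x = (chainOpt g w x).bind (g a) := rfl

private lemma chain_cons_some {X I : Type*} {g : I → X → Option X} {a : I} {w : List I}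
    {x z : X} (h : chainOpt g (a :: w) x = some z) :
    ∃ u, chainOpt g w x = some u ∧ g a u = some z :=
  Option.bind_eq_some_iff.mp h

private lemma chain_cons_of {X I : Type*} {g : I → X → Option X} {a : I} {w : List I}
    {x u z : X} (h1 : chainOpt g w x = some u) (h2 : g a u = some z) :
    chainOpt g (a :: w) x = some z := by
  rw [chain_cons', h1]; exact h2

private lemma coe_eq_of_count {I : Type*} [DecidableEq I] {l1 l2 : List I}
    (h : ∀ a, l1.count a = l2.count a) : (l1 : Multiset I) = (l2 : Multiset I) :=
  Multiset.coe_eq_coe.mpr (List.perm_iff_count.mpr h)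

/-- The B₂ case of homogeneous local confluence. -/
private lemma hlc_B2 {I X : Type} [DecidableEq I]
    (A : I → I → ℤ) (G : GoodGraph I X)
    (hS2 : axS2 A G) (hS3 : axS3 G) (hS4 : axS4 G)
    (i j : I) (hij : i ≠ j) (hAij : A i j = -2) (hAji : A j i = -1)
    (h6 : axS6 G i j)
    (x xi xj : X) (hxi : G.e i x = some xi) (hxj : G.e j x = some xj) :
    ∃ (w w' : List I) (z : X), 2 ≤ w.length ∧
      (w : Multiset I) = (w' : Multiset I) ∧
      w.getLast? = some i ∧ w'.getLast? = some j ∧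
      chainOpt G.e w x = some z ∧ chainOpt G.e w' x = some z := by
  have h2i := hS2 i j hij x xi hxi
  have h3i := hS3 i j hij x xi hxi
  have h2j := hS2 j i hij.symm x xj hxj
  have h3j := hS3 j i hij.symm x xj hxj
  rw [hAji] at h2i
  rw [hAij] at h2j
  have hi : G.eps j xi = G.eps j x ∨ G.eps j xi = G.eps j x + 1 := by omega
  have hj : G.eps i xj = G.eps i x ∨ G.eps i xj = G.eps i x + 1 ∨
      G.eps i xj = G.eps i x + 2 := by omega
  rcases hi with hi | hi
  · obtain ⟨z, hz1, hz2, -⟩ := (hS4 i j hij x xi xj hxi hxj).1 hi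
    refine ⟨[j, i], [i, j], z, by simp, ?_, rfl, rfl, by simp [chainOpt, hxi, hz1],
      by simp [chainOpt, hxj, hz2]⟩
    refine coe_eq_of_count fun a => ?_
    by_cases h1 : a = i <;> by_cases h2 : a = j <;> simp [h1, h2, List.count_cons, hij, hij.symm, @eq_comm _ i a, @eq_comm _ j a]
  rcases hj with hj | hj | hj
  · obtain ⟨z, hz1, hz2, -⟩ := (hS4 j i hij.symm x xj xi hxj hxi).1 hj
    refine ⟨[j, i], [i, j], z, by simp, ?_, rfl, rfl, by simp [chainOpt, hxi, hz2],
      by simp [chainOpt, hxj, hz1]⟩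
    refine coe_eq_of_count fun a => ?_
    by_cases h1 : a = i <;> by_cases h2 : a = j <;> simp [h1, h2, List.count_cons, hij, hij.symm, @eq_comm _ i a, @eq_comm _ j a]
  · obtain ⟨z, zi, zj, hc1, hc2, -⟩ := (hS4 i j hij x xi xj hxi hxj).2 hi hj
    refine ⟨[i, j, j, i], [j, i, i, j], z, by simp, ?_, rfl, rfl, hc1, hc2⟩
    refine coe_eq_of_count fun a => ?_
    by_cases h1 : a = i <;> by_cases h2 : a = j <;> simp [h1, h2, List.count_cons, hij, hij.symm, @eq_comm _ i a, @eq_comm _ j a]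
  · -- the (1,2) case: use (S6)
    obtain ⟨y, y', hy, hy', hmain⟩ := h6 x xi xj hxi hxj hi hj
    obtain ⟨fy, hy0, hfy⟩ := chain_cons_some hy
    obtain ⟨fy', hy'0, hfy'⟩ := chain_cons_some hy'
    have hfiy : G.f i y = some fy := (G.ef i y fy).mp hfy
    have hfiy' : G.f i y' = some fy' := (G.ef i y' fy').mp hfy'
    obtain ⟨hnot, h11, h01, h00⟩ := hmain fy fy' hfiy hfiy'
    have h2y := hS2 i j hij fy y hfy
    have h3y := hS3 i j hij fy y hfy
    have h2y' := hS2 i j hij fy' y' hfy'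
    have h3y' := hS3 i j hij fy' y' hfy'
    rw [hAji] at h2y h2y'
    have hcy : G.phi j fy = G.phi j y ∨ G.phi j fy = G.phi j y + 1 := by omega
    have hcy' : G.phi j fy' = G.phi j y' ∨ G.phi j fy' = G.phi j y' + 1 := by omega
    have hm57 : (([i, i, j, j, i] : List I) : Multiset I) = (([j, i, i, i, j] : List I) : Multiset I) := by
      refine coe_eq_of_count fun a => ?_
      by_cases h1 : a = i <;> by_cases h2 : a = j <;> simp [h1, h2, List.count_cons, hij, hij.symm, @eq_comm _ i a, @eq_comm _ j a]
    rcases hcy with hcy | hcy <;> rcases hcy' with hcy' | hcy'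
    · -- (0,0) : case (R⁻)
      obtain ⟨t, ht1, ht2, -, -⟩ := h00 hcy hcy'
      have hejt : G.e j t = some y' := (G.ef j y' t).mpr ht2
      exact ⟨[i, i, j, j, i], [j, i, i, i, j], y', by simp, hm57, rfl, rfl, hy',
        chain_cons_of (chain_cons_of hy ht1) hejt⟩
    · -- (0,1) : case (Q⁻₁)
      obtain ⟨z, zi, zj, hc1, hc2, -⟩ := h01 hcy hcy'
      refine ⟨[j, i, i, i, j, j, i], [i, j, j, i, i, i, j], z, by simp, ?_, rfl, rfl, hc1, hc2⟩
      refine coe_eq_of_count fun a => ?_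
      by_cases h1 : a = i <;> by_cases h2 : a = j <;> simp [h1, h2, List.count_cons, hij, hij.symm, @eq_comm _ i a, @eq_comm _ j a]
    · -- (1,0) : excluded
      exact absurd ⟨hcy, hcy'⟩ hnot
    · -- (1,1) : case (P⁻₁)
      obtain ⟨t, ht1, ht2, -⟩ := h11 hcy hcy'
      have hejt : G.e j t = some y' := (G.ef j y' t).mpr ht2
      exact ⟨[i, i, j, j, i], [j, i, i, i, j], y', by simp, hm57, rfl, rfl, hy',
        chain_cons_of (chain_cons_of hy ht1) hejt⟩

theorem stmt_17 {I X : Type} [Fintype I] [DecidableEq I]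
    (A : I → I → ℤ) (hA : IsGCM A) (hsym : IsSymmetrizable A) (hrk : Rank2OK A)
    (G : GoodGraph I X) (hreg : ARegular A G) (hextra : ExtraB2 A G)
    (x0 : X) (hmax : IsMaxElem G x0) :
    HLC G := by
  obtain ⟨hS2, hS3, hS4, hS5⟩ := hreg
  intro x i j hij hei hej
  obtain ⟨xi, hxi⟩ := Option.ne_none_iff_exists'.mp hei
  obtain ⟨xj, hxj⟩ := Option.ne_none_iff_exists'.mp hej
  have h2i := hS2 i j hij x xi hxi
  have h3i := hS3 i j hij x xi hxi
  have h2j := hS2 j i hij.symm x xj hxj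
  have h3j := hS3 j i hij.symm x xj hxj
  rcases hrk i j hij with ⟨h1, h2⟩ | ⟨h1, h2⟩ | ⟨h1, h2⟩ | ⟨h1, h2⟩
  · -- A₁ ⊕ A₁
    rw [h2] at h2i
    have hi : G.eps j xi = G.eps j x := by omega
    obtain ⟨z, hz1, hz2, -⟩ := (hS4 i j hij x xi xj hxi hxj).1 hi
    refine ⟨[j, i], [i, j], z, by simp, ?_, rfl, rfl, by simp [chainOpt, hxi, hz1],
      by simp [chainOpt, hxj, hz2]⟩
    refine coe_eq_of_count fun a => ?_
    by_cases ha : a = i <;> by_cases hb : a = j <;> simp [ha, hb, List.count_cons, hij, hij.symm, @eq_comm _ i a, @eq_comm _ j a]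
  · -- A₂
    rw [h2] at h2i
    rw [h1] at h2j
    have hi : G.eps j xi = G.eps j x ∨ G.eps j xi = G.eps j x + 1 := by omega
    have hj : G.eps i xj = G.eps i x ∨ G.eps i xj = G.eps i x + 1 := by omega
    rcases hi with hi | hi
    · obtain ⟨z, hz1, hz2, -⟩ := (hS4 i j hij x xi xj hxi hxj).1 hi
      refine ⟨[j, i], [i, j], z, by simp, ?_, rfl, rfl, by simp [chainOpt, hxi, hz1],
        by simp [chainOpt, hxj, hz2]⟩
      refine coe_eq_of_count fun a => ?_
      by_cases ha : a = i <;> by_cases hb : a = j <;> simp [ha, hb, List.count_cons, hij, hij.symm, @eq_comm _ i a, @eq_comm _ j a]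
    rcases hj with hj | hj
    · obtain ⟨z, hz1, hz2, -⟩ := (hS4 j i hij.symm x xj xi hxj hxi).1 hj
      refine ⟨[j, i], [i, j], z, by simp, ?_, rfl, rfl, by simp [chainOpt, hxi, hz2],
        by simp [chainOpt, hxj, hz1]⟩
      refine coe_eq_of_count fun a => ?_
      by_cases ha : a = i <;> by_cases hb : a = j <;> simp [ha, hb, List.count_cons, hij, hij.symm, @eq_comm _ i a, @eq_comm _ j a]
    · obtain ⟨z, zi, zj, hc1, hc2, -⟩ := (hS4 i j hij x xi xj hxi hxj).2 hi hj
      refine ⟨[i, j, j, i], [j, i, i, j], z, by simp, ?_, rfl, rfl, hc1, hc2⟩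
      refine coe_eq_of_count fun a => ?_
      by_cases ha : a = i <;> by_cases hb : a = j <;> simp [ha, hb, List.count_cons, hij, hij.symm, @eq_comm _ i a, @eq_comm _ j a]
  · -- B₂ for (i,j)
    exact hlc_B2 A G hS2 hS3 hS4 i j hij h1 h2 (hextra i j h1 h2).1 x xi xj hxi hxj
  · -- B₂ for (j,i)
    obtain ⟨w, w', z, hl, hm, hwi, hwj, hc, hc'⟩ :=
      hlc_B2 A G hS2 hS3 hS4 j i hij.symm h2 h1 (hextra j i h2 h1).1 x xj xi hxj hxi
    have hl' : 2 ≤ w'.length := by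
      have hcard := congrArg Multiset.card hm
      simp only [Multiset.coe_card] at hcard
      omega
    exact ⟨w', w, z, hl', hm.symm, hwj, hwi, hc', hc⟩
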